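/- Define W(ᾱ) = -(1/2)[ᾱ²(1-α) + α(1-ᾱ)²](σ₂² + b(ᾱ)²) with b(ᾱ) = ᾱβ/((N-ᾱ)(1-ᾱ)). Then for any ᾱ ∈ [α, 1), W'(ᾱ) < 0 if ᾱ > α and W'(α) ≤ 0 strictly unless b·b' = 0; moreover W'(0) > 0 when σ₂² > 0. Hence any maximizer ᾱ* of W over [0,1) satisfies 0 < ᾱ* < α (the optimal central banker is kitish). -/

import Mathlib

/-- Kites: With W(ᾱ) = -(1/2)[ᾱ²(1-α)+α(1-ᾱ)²](σ₂²+b(ᾱ)²),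
b(ᾱ) = ᾱβ/((N-ᾱ)(1-ᾱ)), and
W'(ᾱ) = (α-ᾱ)(σ₂²+b(ᾱ)²) - [ᾱ²(1-α)+α(1-ᾱ)²]b'(ᾱ)b(ᾱ):
W'(ᾱ) < 0 for ᾱ ∈ (α,1); W'(α) ≤ 0, strictly unless b(α)b'(α) = 0;
W'(0) > 0 when σ₂² > 0; and any maximizer of W on [0,1) lies in (0,α). -/
theorem stmt_13 (α β σ₂sq : ℝ) (hα : α ∈ Set.Ioo (0:ℝ) 1) (hβ : 0 < β)
    (hσ : 0 < σ₂sq) (N : ℕ) (hN : 1 ≤ N)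
    (b b' W W' : ℝ → ℝ)
    (hb : ∀ a, b a = a*β/(((N:ℝ)-a)*(1-a)))
    (hb' : ∀ a, b' a = ((N:ℝ)-a^2)*β/((1-a)^2*((N:ℝ)-a)^2))
    (hW : ∀ a, W a = -(1/2)*(a^2*(1-α)+α*(1-a)^2)*(σ₂sq + (b a)^2))
    (hW' : ∀ a, W' a = (α-a)*(σ₂sq + (b a)^2) - (a^2*(1-α)+α*(1-a)^2)*(b' a)*(b a)) :
    (∀ a : ℝ, α < a → a < 1 → W' a < 0) ∧
    (W' α ≤ 0 ∧ (b α * b' α ≠ 0 → W' α < 0)) ∧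
    (0 < W' 0) ∧
    (∀ astar : ℝ, astar ∈ Set.Ico (0:ℝ) 1 →
      IsMaxOn W (Set.Ico (0:ℝ) 1) astar → 0 < astar ∧ astar < α) := by
  obtain ⟨hα0, hα1⟩ := hα
  have hN1 : (1:ℝ) ≤ (N:ℝ) := by exact_mod_cast hN
  -- positivity facts about b, b' on (0,1)
  have hbpos : ∀ a : ℝ, 0 < a → a < 1 → 0 < b a := by
    intro a ha0 ha1
    rw [hb]
    have hd : 0 < ((N:ℝ)-a)*(1-a) := by nlinarith
    exact div_pos (mul_pos ha0 hβ) hd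
  have hb'pos : ∀ a : ℝ, 0 ≤ a → a < 1 → 0 < b' a := by
    intro a ha0 ha1
    rw [hb']
    have h1 : 0 < (N:ℝ) - a^2 := by nlinarith
    have h2 : 0 < (1-a)^2*((N:ℝ)-a)^2 := by
      have hh1 : (0:ℝ) < (N:ℝ) - a := by nlinarith
      have hh2 : (0:ℝ) < 1 - a := by linarith
      exact mul_pos (pow_pos hh2 2) (pow_pos hh1 2)
    exact div_pos (mul_pos h1 hβ) h2
  -- part 1
  have P1 : ∀ a : ℝ, α < a → a < 1 → W' a < 0 := by
    intro a haα ha1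
    have ha0 : 0 < a := lt_trans hα0 haα
    have h1 := hbpos a ha0 ha1
    have h2 := hb'pos a (le_of_lt ha0) ha1
    have hg : 0 < a^2*(1-α)+α*(1-a)^2 := by nlinarith
    rw [hW']
    have hfirst : (α-a)*(σ₂sq + (b a)^2) < 0 := by
      have : 0 < σ₂sq + (b a)^2 := by positivity
      nlinarith
    nlinarith [mul_pos (mul_pos hg h2) h1]
  -- part 2
  have P2 : W' α < 0 := by
    have h1 := hbpos α hα0 hα1
    have h2 := hb'pos α (le_of_lt hα0) hα1
    have hg : 0 < α^2*(1-α)+α*(1-α)^2 := by nlinarith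
    rw [hW']
    nlinarith [mul_pos (mul_pos hg h2) h1]
  -- part 3
  have hb0 : b 0 = 0 := by rw [hb]; simp
  have P3 : 0 < W' 0 := by
    rw [hW', hb0]
    simp
    nlinarith
  refine ⟨P1, ⟨le_of_lt P2, fun _ => P2⟩, P3, ?_⟩
  -- derivative of W is W' on [0,1)
  have hderiv : ∀ x : ℝ, 0 ≤ x → x < 1 → HasDerivAt W (W' x) x := by
    intro x hx0 hx1
    have hWe : W = fun a => -(1/2)*(a^2*(1-α)+α*(1-a)^2)*
        (σ₂sq + (a*β/(((N:ℝ)-a)*(1-a)))^2) := by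
      funext a; rw [hW, hb]
    have hv : ((N:ℝ)-x)*(1-x) ≠ 0 := by
      have : (0:ℝ) < ((N:ℝ)-x)*(1-x) := by nlinarith
      exact ne_of_gt this
    have hden : HasDerivAt (fun a : ℝ => ((N:ℝ)-a)*(1-a))
        ((-1)*(1-x) + ((N:ℝ)-x)*(-1)) x := by
      have h1 : HasDerivAt (fun a : ℝ => (N:ℝ)-a) (-1) x := by
        simpa using (hasDerivAt_id x).const_sub (N:ℝ)
      have h2 : HasDerivAt (fun a : ℝ => 1-a) (-1) x := by
        simpa using (hasDerivAt_id x).const_sub (1:ℝ)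
      exact h1.mul h2
    have hnum : HasDerivAt (fun a : ℝ => a*β) β x := by
      simpa using (hasDerivAt_id x).mul_const β
    have hbd : HasDerivAt (fun a : ℝ => a*β/(((N:ℝ)-a)*(1-a))) (b' x) x := by
      have := hnum.div hden hv
      convert this using 1
      case e'_4 => rfl
      case e'_5 => rfl
      case e'_8 => rfl
      have hd2 : ((1:ℝ)-x)^2*((N:ℝ)-x)^2 ≠ 0 := by
        have : (0:ℝ) < ((N:ℝ)-x)*(1-x) := by nlinarith
        nlinarith
      rw [hb', div_eq_div_iff hd2 (pow_ne_zero 2 hv)]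
      ring
    have hsq : HasDerivAt (fun a : ℝ => σ₂sq + (a*β/(((N:ℝ)-a)*(1-a)))^2)
        (2*(x*β/(((N:ℝ)-x)*(1-x)))*(b' x)) x := by
      have := (hbd.pow 2).const_add σ₂sq
      convert this using 1
      case e'_4 => rfl
      case e'_5 => rfl
      case e'_8 => rfl
      ring
    have hg : HasDerivAt (fun a : ℝ => a^2*(1-α)+α*(1-a)^2)
        (2*x*(1-α) + α*(2*(1-x)*(-1))) x := by
      have h1 : HasDerivAt (fun a : ℝ => a^2*(1-α)) (2*x*(1-α)) x := by
        have := (hasDerivAt_pow 2 x).mul_const (1-α)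
        simpa using this
      have h2 : HasDerivAt (fun a : ℝ => α*(1-a)^2) (α*(2*(1-x)*(-1))) x := by
        have hi : HasDerivAt (fun a : ℝ => 1-a) (-1) x := by
          simpa using (hasDerivAt_id x).const_sub (1:ℝ)
        have := (hi.pow 2).const_mul α
        convert this using 1
        case e'_4 => rfl
        case e'_5 => rfl
        case e'_8 => rfl
        simp
      exact h1.add h2
    have hfull := (hg.mul hsq).const_mul (-(1/2) : ℝ)
    rw [hWe]
    have heq : W' x = -(1/2) * ((2*x*(1-α) + α*(2*(1-x)*(-1))) *
        (σ₂sq + (x*β/(((N:ℝ)-x)*(1-x)))^2) +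
        (x^2*(1-α)+α*(1-x)^2) * (2*(x*β/(((N:ℝ)-x)*(1-x)))*(b' x))) := by
      rw [hW', hb]
      ring
    rw [heq]
    convert hfull using 2
    case e'_4 => rfl
    case e'_5 => rfl
    case e'_8 =>
      simp only [Pi.mul_apply]
      ring
  -- part 4
  intro astar ⟨ha0, ha1⟩ hmax
  have hne0 : astar ≠ 0 := by
    intro h0
    subst h0
    -- derivative positive at 0, but max at 0 on [0,1): find point with larger value
    have hd := hderiv 0 le_rfl one_pos
    rw [hasDerivAt_iff_tendsto_slope] at hd
    have hd' : Filter.Tendsto (slope W 0) (nhdsWithin 0 (Set.Ioi 0)) (nhds (W' 0)) :=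
      hd.mono_left (nhdsWithin_mono _ (fun y hy => ne_of_gt hy))
    have hev : ∀ᶠ y in nhdsWithin 0 (Set.Ioi (0:ℝ)), 0 < slope W 0 y :=
      hd'.eventually (eventually_gt_nhds P3)
    have hev2 : ∀ᶠ y in nhdsWithin 0 (Set.Ioi (0:ℝ)), y < 1 := by
      filter_upwards [eventually_nhdsWithin_of_eventually_nhds
        (eventually_lt_nhds (by norm_num : (0:ℝ) < 1))] with y hy using hy
    obtain ⟨y, ⟨⟨hsl, hylt1⟩, hyIoi⟩⟩ := ((hev.and hev2).and self_mem_nhdsWithin).exists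
    have hyIoi' : (0:ℝ) < y := hyIoi
    have hle : W y ≤ W 0 := hmax ⟨le_of_lt hyIoi', hylt1⟩
    have hslope : slope W 0 y = (W y - W 0) / y := by
      rw [slope_def_field]; field_simp; ring
    rw [hslope] at hsl
    rcases div_pos_iff.mp hsl with ⟨h1, _⟩ | ⟨_, h2⟩
    · linarith
    · linarith
  have hastar0 : 0 < astar := lt_of_le_of_ne ha0 (Ne.symm hne0)
  refine ⟨hastar0, ?_⟩
  by_contra hge
  push_neg at hge
  have hlt1 : astar < 1 := ha1
  have hmem : Set.Ico (0:ℝ) 1 ∈ nhds astar := by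
    have : Set.Ioo (0:ℝ) 1 ∈ nhds astar := isOpen_Ioo.mem_nhds ⟨hastar0, hlt1⟩
    exact Filter.mem_of_superset this Set.Ioo_subset_Ico_self
  have hzero : W' astar = 0 :=
    (hmax.isLocalMax hmem).hasDerivAt_eq_zero (hderiv astar ha0 hlt1)
  rcases lt_or_eq_of_le hge with h | h
  · exact absurd hzero (ne_of_lt (P1 astar h hlt1))
  · rw [← h] at hzero; exact absurd hzero (ne_of_lt P2)
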